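/- Let Σ₀ and Σ₁ be positive definite real symmetric d×d matrices. Then the curve Σ(t) = Σ₁^{1/2} (Σ₁^{-1/2} Σ₀ Σ₁^{-1/2})^{1-t} Σ₁^{1/2} satisfies the geodesic equation d²Σ/dt² = (dΣ/dt) Σ⁻¹ (dΣ/dt) for all t ∈ (0,1). -/

import Mathlib

open Matrix

attribute [local instance] Matrix.normedAddCommGroup Matrix.normedSpace

/-- Spectral real power of a positive definite matrix `U diag D Uᵀ`. -/
noncomputable def spectralPow {d : ℕ} (U : Matrix (Fin d) (Fin d) ℝ) (D : Fin d → ℝ)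
    (s : ℝ) : Matrix (Fin d) (Fin d) ℝ :=
  U * Matrix.diagonal (fun i => D i ^ s) * Uᵀ

lemma hasDerivAt_conj_diagonal {d : ℕ} (A B : Matrix (Fin d) (Fin d) ℝ)
    {g : ℝ → Fin d → ℝ} {g' : Fin d → ℝ} {t : ℝ}
    (h : ∀ i, HasDerivAt (fun t => g t i) (g' i) t) :
    HasDerivAt (fun t => A * Matrix.diagonal (g t) * B) (A * Matrix.diagonal g' * B) t := by
  have hp : HasDerivAt g g' t := hasDerivAt_pi.2 h
  let L : (Fin d → ℝ) →ₗ[ℝ] Matrix (Fin d) (Fin d) ℝ :=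
    { toFun := fun v => A * Matrix.diagonal v * B
      map_add' := by
        intro x y
        show A * Matrix.diagonal (fun i => x i + y i) * B =
          A * Matrix.diagonal x * B + A * Matrix.diagonal y * B
        rw [← Matrix.diagonal_add, Matrix.mul_add, Matrix.add_mul]
      map_smul' := by
        intro c x
        rw [Matrix.diagonal_smul, Matrix.mul_smul, Matrix.smul_mul, RingHom.id_apply] }
  exact L.toContinuousLinearMap.hasFDerivAt.comp_hasDerivAt t hp

/-- with `S = Σ₁^{1/2}` and `S⁻¹ Σ₀ S⁻¹ = U diag D Uᵀ`, the curve
`Σ(t) = Σ₁^{1/2} (Σ₁^{-1/2} Σ₀ Σ₁^{-1/2})^{1-t} Σ₁^{1/2}` satisfies the geodesic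
equation `d²Σ/dt² = (dΣ/dt) Σ⁻¹ (dΣ/dt)` for all `t ∈ (0,1)`. -/
theorem stmt1 {d : ℕ} (S0 S1 S : Matrix (Fin d) (Fin d) ℝ)
    (hS0 : S0.PosDef) (hS1 : S1.PosDef)
    (hS : S.PosDef) (hSsq : S * S = S1)
    (U : Matrix (Fin d) (Fin d) ℝ) (D : Fin d → ℝ)
    (hU : U * Uᵀ = 1) (hD : ∀ i, 0 < D i)
    (hdecomp : S⁻¹ * S0 * S⁻¹ = U * Matrix.diagonal D * Uᵀ)
    (Sig : ℝ → Matrix (Fin d) (Fin d) ℝ)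
    (hSig : ∀ t, Sig t = S * spectralPow U D (1 - t) * S) :
    ∀ t ∈ Set.Ioo (0:ℝ) 1,
      deriv (deriv Sig) t = deriv Sig t * (Sig t)⁻¹ * deriv Sig t := by
  intro t ht
  -- basic facts
  have hSdet : IsUnit S.det := isUnit_iff_ne_zero.mpr hS.det_pos.ne'
  have hSinv : S * S⁻¹ = 1 := Matrix.mul_nonsing_inv S hSdet
  have hSinv' : S⁻¹ * S = 1 := Matrix.nonsing_inv_mul S hSdet
  have hUtU : Uᵀ * U = 1 := mul_eq_one_comm.mp hU
  -- rewriting helpers (left-associated collapse)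
  have c1 : ∀ X, S * (S⁻¹ * X) = X := fun X => by rw [← Matrix.mul_assoc, hSinv, Matrix.one_mul]
  have c2 : ∀ X, S⁻¹ * (S * X) = X := fun X => by rw [← Matrix.mul_assoc, hSinv', Matrix.one_mul]
  have c3 : ∀ X, Uᵀ * (U * X) = X := fun X => by rw [← Matrix.mul_assoc, hUtU, Matrix.one_mul]
  have c4 : ∀ X, U * (Uᵀ * X) = X := fun X => by rw [← Matrix.mul_assoc, hU, Matrix.one_mul]
  -- the curve in convenient form
  have hSig' : Sig = fun t => (S * U) * Matrix.diagonal (fun i => D i ^ (1 - t)) * (Uᵀ * S) := by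
    funext s
    rw [hSig s, spectralPow]
    simp only [Matrix.mul_assoc]
  set p : ℝ → Fin d → ℝ := fun t i => D i ^ (1 - t) with hp
  have hppos : ∀ s i, 0 < p s i := fun s i => Real.rpow_pos_of_pos (hD i) _
  -- first derivative entries
  have h1 : ∀ (s : ℝ) (i : Fin d),
      HasDerivAt (fun t => D i ^ (1 - t)) (D i ^ (1 - s) * Real.log (D i) * (-1)) s := by
    intro s i
    have hin : HasDerivAt (fun t : ℝ => 1 - t) (-1) s := (hasDerivAt_id s).const_sub 1
    have hout := (Real.hasStrictDerivAt_const_rpow (hD i) (1 - s)).hasDerivAt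
    exact hout.comp s hin
  have h2 : ∀ (s : ℝ) (i : Fin d),
      HasDerivAt (fun t => D i ^ (1 - t) * Real.log (D i) * (-1))
        (D i ^ (1 - s) * Real.log (D i) * (-1) * Real.log (D i) * (-1)) s := by
    intro s i
    exact ((h1 s i).mul_const (Real.log (D i))).mul_const (-1)
  -- derivative of Sig
  have hD1 : ∀ s : ℝ, HasDerivAt Sig
      ((S * U) * Matrix.diagonal (fun i => D i ^ (1 - s) * Real.log (D i) * (-1)) * (Uᵀ * S)) s := by
    intro s
    rw [hSig']
    exact hasDerivAt_conj_diagonal (S * U) (Uᵀ * S) (fun i => h1 s i)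
  have hd1 : deriv Sig = fun s =>
      (S * U) * Matrix.diagonal (fun i => D i ^ (1 - s) * Real.log (D i) * (-1)) * (Uᵀ * S) :=
    funext fun s => (hD1 s).deriv
  have hD2 : HasDerivAt (deriv Sig)
      ((S * U) * Matrix.diagonal
        (fun i => D i ^ (1 - t) * Real.log (D i) * (-1) * Real.log (D i) * (-1)) * (Uᵀ * S)) t := by
    rw [hd1]
    exact hasDerivAt_conj_diagonal (S * U) (Uᵀ * S) (fun i => h2 t i)
  -- inverse of Sig t
  have hinv : (Sig t)⁻¹ = S⁻¹ * U * Matrix.diagonal (fun i => (p t i)⁻¹) * (Uᵀ * S⁻¹) := by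
    apply Matrix.inv_eq_right_inv
    rw [hSig']
    simp only [Matrix.mul_assoc, c1, c2, c3, c4]
    rw [← Matrix.mul_assoc (Matrix.diagonal _), Matrix.diagonal_mul_diagonal]
    have : (fun i => p t i * (p t i)⁻¹) = fun _ => (1:ℝ) := by
      funext i; exact mul_inv_cancel₀ (hppos t i).ne'
    rw [this]
    have h1d : (Matrix.diagonal fun _ : Fin d => (1:ℝ)) = 1 := Matrix.diagonal_one
    rw [h1d, Matrix.one_mul]
    simp only [c4, hSinv]
  -- conclude
  refine hD2.deriv.trans ?_
  rw [hd1, hinv]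
  simp only [Matrix.mul_assoc, c1, c2, c3, c4]
  rw [← Matrix.mul_assoc (Matrix.diagonal _) (Matrix.diagonal _),
    Matrix.diagonal_mul_diagonal,
    ← Matrix.mul_assoc (Matrix.diagonal _) (Matrix.diagonal _),
    Matrix.diagonal_mul_diagonal]
  congr 2
  funext i j
  simp only [Matrix.diagonal_mul, Pi.mul_apply]
  congr 1
  have hne : p t i ≠ 0 := (hppos t i).ne'
  field_simp
  ring
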